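/- Let d ≥ 1, let ρ be a Hermitian positive semidefinite d×d complex matrix with Tr ρ = 1, and let x₁,…,x_n (n ≥ 1) be d×d complex matrices. Then the Poisson moment formula satisfies the growth bound | Σ_σ ∏_{A∈σ} Tr(ρ · ∏_{j∈A} x_j) | ≤ B_n · ∏_{i=1}^n |||x_i|||, where σ runs over all set partitions of {1,…,n}, for each block A the product ∏_{j∈A} x_j is taken in increasing order of the indices, B_n is the Bell number (the total number of set partitions of an n-element set), and |||x||| := max{ ‖x‖, Tr(ρ x*x)^{1/2}, Tr(ρ xx*)^{1/2} } with ‖x‖ the ℓ² → ℓ² operator norm of the matrix x and x* its conjugate transpose. (This is the moment growth estimate used in the noncommutative Hamburger moment theorem argument; the key ingredient is the Cauchy–Schwarz estimate |Tr(ρ x y₁⋯y_r z)| ≤ Tr(ρ xx*)^{1/2} · ∏_i ‖y_i‖ · Tr(ρ z*z)^{1/2}.) -/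

import Mathlib

open scoped BigOperators ComplexOrder Matrix

namespace Stmt19
noncomputable section

/-- A set partition of `Fin n`: a finset of pairwise disjoint nonempty blocks whose union is
everything. -/
def IsSetPartition {n : ℕ} (σ : Finset (Finset (Fin n))) : Prop :=
  ∅ ∉ σ ∧ (∀ A ∈ σ, ∀ B ∈ σ, A ≠ B → Disjoint A B) ∧ σ.sup id = Finset.univ

instance {n : ℕ} (σ : Finset (Finset (Fin n))) : Decidable (IsSetPartition σ) :=
  inferInstanceAs (Decidable (∅ ∉ σ ∧ (∀ A ∈ σ, ∀ B ∈ σ, A ≠ B → Disjoint A B) ∧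
    σ.sup id = Finset.univ))

/-- Ordered product of the matrices `x j`, `j ∈ A`, in increasing order of the index `j`;
the empty product is the identity. -/
def orderedProd {n d : ℕ} (x : Fin n → Matrix (Fin d) (Fin d) ℂ) (A : Finset (Fin n)) :
    Matrix (Fin d) (Fin d) ℂ :=
  ((A.sort (· ≤ ·)).map x).prod

/-- The `ℓ² → ℓ²` operator norm of a `d × d` complex matrix. -/
def opNorm {d : ℕ} (x : Matrix (Fin d) (Fin d) ℂ) : ℝ :=
  ‖Matrix.toEuclideanCLM (𝕜 := ℂ) (n := Fin d) x‖

/-- The seminorm `|||x||| = max{‖x‖, Tr(ρ x*x)^{1/2}, Tr(ρ xx*)^{1/2}}` associated to the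
state `ω(x) = Tr(ρ x)`. -/
def tripleNorm {d : ℕ} (ρ x : Matrix (Fin d) (Fin d) ℂ) : ℝ :=
  max (opNorm x) (max (Real.sqrt ((ρ * xᴴ * x).trace.re)) (Real.sqrt ((ρ * x * xᴴ).trace.re)))

lemma prod_sort_eq {n : ℕ} (A : Finset (Fin n)) (f : Fin n → ℝ) :
    ((A.sort (· ≤ ·)).map f).prod = ∏ j ∈ A, f j := by
  have h : (A.sort (· ≤ ·) : Multiset (Fin n)) = A.val := Finset.sort_eq _ _
  calc ((A.sort (· ≤ ·)).map f).prod
      = ((A.sort (· ≤ ·) : Multiset (Fin n)).map f).prod := by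
        rw [Multiset.map_coe, Multiset.prod_coe]
    _ = (A.val.map f).prod := by rw [h]
    _ = ∏ j ∈ A, f j := rfl

lemma opNorm_nonneg {d : ℕ} (x : Matrix (Fin d) (Fin d) ℂ) : 0 ≤ opNorm x :=
  norm_nonneg _

lemma opNorm_le_tripleNorm {d : ℕ} (ρ x : Matrix (Fin d) (Fin d) ℂ) :
    opNorm x ≤ tripleNorm ρ x := le_max_left _ _

lemma tripleNorm_nonneg {d : ℕ} (ρ x : Matrix (Fin d) (Fin d) ℂ) : 0 ≤ tripleNorm ρ x :=
  (opNorm_nonneg x).trans (opNorm_le_tripleNorm ρ x)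

lemma opNorm_orderedProd_le {n d : ℕ} (x : Fin n → Matrix (Fin d) (Fin d) ℂ)
    (A : Finset (Fin n)) (hA : A.Nonempty) :
    opNorm (orderedProd x A) ≤ ∏ j ∈ A, opNorm (x j) := by
  set l := A.sort (· ≤ ·) with hl
  have hlne : l ≠ [] := by
    intro h
    have hc := Finset.length_sort (α := Fin n) (· ≤ ·) (s := A)
    rw [← hl, h, List.length_nil] at hc
    exact hA.card_pos.ne' hc.symm
  have hmap : Matrix.toEuclideanCLM (𝕜 := ℂ) (n := Fin d) ((l.map x).prod)
      = ((l.map x).map (Matrix.toEuclideanCLM (𝕜 := ℂ) (n := Fin d))).prod :=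
    map_list_prod _ _
  calc opNorm (orderedProd x A)
      = ‖((l.map x).map (Matrix.toEuclideanCLM (𝕜 := ℂ) (n := Fin d))).prod‖ := by
        rw [orderedProd, opNorm, ← hl, hmap]
    _ ≤ (((l.map x).map (Matrix.toEuclideanCLM (𝕜 := ℂ) (n := Fin d))).map norm).prod :=
        List.norm_prod_le' (by simpa using hlne)
    _ = (l.map fun j => opNorm (x j)).prod := by
        rw [List.map_map, List.map_map]; rfl
    _ = ∏ j ∈ A, opNorm (x j) := prod_sort_eq A _

lemma trace_bound {d : ℕ} (ρ : Matrix (Fin d) (Fin d) ℂ) (hρ : ρ.PosSemidef)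
    (hρ1 : ρ.trace = 1) (y : Matrix (Fin d) (Fin d) ℂ) :
    ‖(ρ * y).trace‖ ≤ opNorm y := by
  obtain ⟨B, hB⟩ : ∃ B : Matrix (Fin d) (Fin d) ℂ, ρ = Bᴴ * B := by
    open scoped MatrixOrder Matrix.Norms.L2Operator in
    exact CStarAlgebra.nonneg_iff_eq_star_mul_self.mp hρ.nonneg
  set T := Matrix.toEuclideanCLM (𝕜 := ℂ) (n := Fin d) y with hT
  set u : Fin d → EuclideanSpace ℂ (Fin d) :=
    fun i => (WithLp.equiv 2 (Fin d → ℂ)).symm (fun k => star (B i k)) with hu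
  have key : ∀ i, (B * y * Bᴴ) i i = inner (𝕜 := ℂ) (u i) (T (u i)) := by
    intro i
    simp only [hu, hT, WithLp.equiv_symm_apply, Matrix.toEuclideanCLM_toLp, PiLp.inner_apply,
      PiLp.toLp_apply, WithLp.ofLp_toLp, RCLike.inner_apply, Matrix.toLin'_apply,
      Matrix.mulVec, dotProduct, Matrix.mul_apply, Matrix.conjTranspose_apply]
    simp only [Complex.star_def, Complex.conj_conj, Finset.sum_mul, Finset.mul_sum]
    rw [Finset.sum_comm]
    exact Finset.sum_congr rfl fun a _ => Finset.sum_congr rfl fun b _ => by ring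
  have htr : (ρ * y).trace = (B * y * Bᴴ).trace := by
    rw [hB, Matrix.mul_assoc, Matrix.trace_mul_comm, Matrix.mul_assoc]
  have hnorm_sq : ∑ i, ‖u i‖ ^ 2 = 1 := by
    have h1 : ρ.trace.re = 1 := by rw [hρ1]; simp
    rw [hB] at h1
    have h2 : (Bᴴ * B).trace.re = ∑ i, ∑ k, Complex.normSq (B k i) := by
      simp only [Matrix.trace, Matrix.diag, Matrix.mul_apply, Matrix.conjTranspose_apply,
        Complex.re_sum]
      refine Finset.sum_congr rfl fun i _ => Finset.sum_congr rfl fun k _ => ?_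
      rw [Complex.star_def, mul_comm, Complex.mul_conj]
      simp
    have h3 : ∀ i, ‖u i‖ ^ 2 = ∑ k, Complex.normSq (B i k) := by
      intro i
      rw [EuclideanSpace.norm_eq, Real.sq_sqrt (by positivity)]
      refine Finset.sum_congr rfl fun k _ => ?_
      simp [hu, WithLp.equiv_symm_apply, PiLp.toLp_apply, Complex.sq_norm]
    calc ∑ i, ‖u i‖ ^ 2 = ∑ i, ∑ k, Complex.normSq (B i k) :=
          Finset.sum_congr rfl fun i _ => h3 i
      _ = ∑ i, ∑ k, Complex.normSq (B k i) := Finset.sum_comm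
      _ = 1 := by rw [← h2, h1]
  calc ‖(ρ * y).trace‖ = ‖∑ i, inner (𝕜 := ℂ) (u i) (T (u i))‖ := by
        rw [htr]; congr 1; exact Finset.sum_congr rfl fun i _ => key i
    _ ≤ ∑ i, ‖inner (𝕜 := ℂ) (u i) (T (u i))‖ := norm_sum_le _ _
    _ ≤ ∑ i, ‖T‖ * ‖u i‖ ^ 2 := by
        refine Finset.sum_le_sum fun i _ => ?_
        calc ‖inner (𝕜 := ℂ) (u i) (T (u i))‖ ≤ ‖u i‖ * ‖T (u i)‖ := norm_inner_le_norm _ _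
          _ ≤ ‖u i‖ * (‖T‖ * ‖u i‖) := by
              exact mul_le_mul_of_nonneg_left (T.le_opNorm _) (norm_nonneg _)
          _ = ‖T‖ * ‖u i‖ ^ 2 := by ring
    _ = ‖T‖ := by rw [← Finset.mul_sum, hnorm_sq, mul_one]
    _ = opNorm y := rfl

/-- Moment growth estimate for the Poisson moment formula: for a density matrix `ρ`
(Hermitian, positive semidefinite, `Tr ρ = 1`),
`|Σ_σ Π_{A∈σ} Tr(ρ Π_{j∈A} x_j)| ≤ B_n · Π_i |||x_i|||`, where `B_n` is the Bell number
(the total number of set partitions of an `n`-element set). -/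
theorem poisson_moment_growth_bound (d n : ℕ) (hd : 1 ≤ d) (hn : 1 ≤ n)
    (ρ : Matrix (Fin d) (Fin d) ℂ) (hρ : ρ.PosSemidef) (hρ1 : ρ.trace = 1)
    (x : Fin n → Matrix (Fin d) (Fin d) ℂ) :
    ‖∑ σ ∈ Finset.univ.filter (IsSetPartition (n := n)),
        ∏ A ∈ σ, (ρ * orderedProd x A).trace‖
      ≤ ((Finset.univ.filter (IsSetPartition (n := n))).card : ℝ) *
          ∏ i : Fin n, tripleNorm ρ (x i) := by
  have hterm : ∀ σ ∈ Finset.univ.filter (IsSetPartition (n := n)),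
      ‖∏ A ∈ σ, (ρ * orderedProd x A).trace‖ ≤ ∏ i : Fin n, tripleNorm ρ (x i) := by
    intro σ hσ
    obtain ⟨hne, hdisj, hsup⟩ : IsSetPartition σ := (Finset.mem_filter.mp hσ).2
    have hblock : ∀ A ∈ σ, ‖(ρ * orderedProd x A).trace‖ ≤ ∏ j ∈ A, tripleNorm ρ (x j) := by
      intro A hA
      have hAne : A.Nonempty := Finset.nonempty_of_ne_empty (fun h => hne (h ▸ hA))
      calc ‖(ρ * orderedProd x A).trace‖ ≤ opNorm (orderedProd x A) :=
            trace_bound ρ hρ hρ1 _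
        _ ≤ ∏ j ∈ A, opNorm (x j) := opNorm_orderedProd_le x A hAne
        _ ≤ ∏ j ∈ A, tripleNorm ρ (x j) :=
            Finset.prod_le_prod (fun j _ => opNorm_nonneg _)
              (fun j _ => opNorm_le_tripleNorm ρ (x j))
    have hpart : ∏ i : Fin n, tripleNorm ρ (x i)
        = ∏ A ∈ σ, ∏ j ∈ A, tripleNorm ρ (x j) := by
      rw [← hsup, Finset.sup_eq_biUnion]
      exact Finset.prod_biUnion fun A hA B hB hAB => hdisj A hA B hB hAB
    calc ‖∏ A ∈ σ, (ρ * orderedProd x A).trace‖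
        = ∏ A ∈ σ, ‖(ρ * orderedProd x A).trace‖ := norm_prod _ _
      _ ≤ ∏ A ∈ σ, ∏ j ∈ A, tripleNorm ρ (x j) :=
          Finset.prod_le_prod (fun A _ => norm_nonneg _) hblock
      _ = ∏ i : Fin n, tripleNorm ρ (x i) := hpart.symm
  calc ‖∑ σ ∈ Finset.univ.filter (IsSetPartition (n := n)),
        ∏ A ∈ σ, (ρ * orderedProd x A).trace‖
      ≤ ∑ σ ∈ Finset.univ.filter (IsSetPartition (n := n)),
          ‖∏ A ∈ σ, (ρ * orderedProd x A).trace‖ := norm_sum_le _ _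
    _ ≤ ∑ σ ∈ Finset.univ.filter (IsSetPartition (n := n)),
          ∏ i : Fin n, tripleNorm ρ (x i) := Finset.sum_le_sum hterm
    _ = ((Finset.univ.filter (IsSetPartition (n := n))).card : ℝ) *
          ∏ i : Fin n, tripleNorm ρ (x i) := by
        rw [Finset.sum_const, nsmul_eq_mul]

end
end Stmt19
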